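/- The real matrix-variate gamma function satisfies Γ_p(a) = π^{p(p−1)/4} ∏_{j=0}^{p−1} Γ(a − j/2) for Re(a) > (p−1)/2, and in particular Γ_1(a) = Γ(a) and Γ_2(a) = π^{1/2} Γ(a) Γ(a − 1/2). -/

import Mathlib

open Real MeasureTheory

section Aux

open Set

private lemma shift_integral' (f : ℝ → ℝ) (c : ℝ) :
    ∫ y in Ioi c, f y = ∫ u in Ioi (0:ℝ), f (u + c) := by
  have h := (measurePreserving_add_right (volume : Measure ℝ) c).setIntegral_preimage_emb
    (MeasurableEquiv.addRight c).measurableEmbedding f (Ioi c)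
  have hpre : (· + c) ⁻¹' Ioi c = Ioi (0:ℝ) := by ext u; simp
  rw [hpre] at h; exact h.symm

private lemma shift_integrableOn' {f : ℝ → ℝ} {c : ℝ}
    (hf : IntegrableOn (fun u => f (u + c)) (Ioi (0:ℝ))) : IntegrableOn f (Ioi c) := by
  have h := (measurePreserving_add_right (volume : Measure ℝ) c).integrableOn_comp_preimage
    (MeasurableEquiv.addRight c).measurableEmbedding (f := f) (s := Ioi c)
  have hpre : (· + c) ⁻¹' Ioi c = Ioi (0:ℝ) := by ext u; simp
  rw [hpre] at h
  exact h.mp hf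

private lemma y_integrable' {a x z : ℝ} (ha : 1 < a) (hx : 0 < x) :
    IntegrableOn (fun u : ℝ => (u - z^2) ^ (a - 3/2) * Real.exp (-(x + x⁻¹ * u))) (Ioi (z^2)) := by
  apply shift_integrableOn'
  have hbase : IntegrableOn
      (fun t : ℝ => t ^ (a - 3/2) * Real.exp (-x⁻¹ * t ^ (1:ℝ))) (Ioi (0:ℝ)) :=
    integrableOn_rpow_mul_exp_neg_mul_rpow (by linarith) one_pos (inv_pos.mpr hx)
  simp only [Real.rpow_one] at hbase
  have := (hbase.const_mul (Real.exp (-(x + x⁻¹ * z^2))))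
  refine IntegrableOn.congr_fun this (fun w _ => ?_) measurableSet_Ioi
  have h1 : (w + z^2 - z^2 : ℝ) = w := by ring
  have h2 : -(x + x⁻¹ * (w + z^2)) = -(x + x⁻¹ * z^2) + (-x⁻¹ * w) := by ring
  rw [h1, h2, Real.exp_add]
  ring

private lemma y_integral' {a x z : ℝ} (ha : 1 < a) (hx : 0 < x) :
    ∫ u in Ioi (z^2), (u - z^2) ^ (a - 3/2) * Real.exp (-(x + x⁻¹ * u))
      = Real.exp (-(x + x⁻¹ * z^2)) * (x ^ (a - 1/2) * Real.Gamma (a - 1/2)) := by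
  rw [shift_integral']
  have heq : ∀ w : ℝ, (w + z^2 - z^2) ^ (a - 3/2) * Real.exp (-(x + x⁻¹ * (w + z^2)))
      = Real.exp (-(x + x⁻¹ * z^2)) * (w ^ (a - 1/2 - 1) * Real.exp (-(x⁻¹ * w))) := by
    intro w
    have h1 : (w + z^2 - z^2 : ℝ) = w := by ring
    have h2 : -(x + x⁻¹ * (w + z^2)) = -(x + x⁻¹ * z^2) + -(x⁻¹ * w) := by ring
    have h3 : a - 3/2 = a - 1/2 - 1 := by ring
    rw [h1, h2, h3, Real.exp_add]; ring
  simp_rw [heq]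
  rw [integral_const_mul, Real.integral_rpow_mul_exp_neg_mul_Ioi (by linarith) (inv_pos.mpr hx)]
  rw [one_div, inv_inv]

private lemma inner_y_lint' {a x z : ℝ} (ha : 1 < a) (hx : 0 < x) :
    (∫⁻ y : ℝ, ENNReal.ofReal (Set.indicator
        {v : ℝ × ℝ × ℝ | 0 < v.1 ∧ 0 < v.1 * v.2.1 - v.2.2^2}
        (fun v => (v.1 * v.2.1 - v.2.2^2) ^ (a - 3/2) * Real.exp (-(v.1 + v.2.1))) (x, (y, z))))
      = ENNReal.ofReal ((x⁻¹ * Real.exp (-x) * x ^ (a - 1/2) * Real.Gamma (a - 1/2))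
          * Real.exp (-(x⁻¹ * z^2))) := by
  set φ : ℝ → ℝ := fun y => (x * y - z^2) ^ (a - 3/2) * Real.exp (-(x + y)) with hφdef
  set ψ : ℝ → ℝ := fun u => (u - z^2) ^ (a - 3/2) * Real.exp (-(x + x⁻¹ * u)) with hψdef
  have hφψ : ∀ y : ℝ, φ y = ψ (x * y) := by
    intro y
    simp only [hφdef, hψdef, inv_mul_cancel_left₀ hx.ne']
  have hind : ∀ y : ℝ, Set.indicator
      {v : ℝ × ℝ × ℝ | 0 < v.1 ∧ 0 < v.1 * v.2.1 - v.2.2^2}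
      (fun v => (v.1 * v.2.1 - v.2.2^2) ^ (a - 3/2) * Real.exp (-(v.1 + v.2.1))) (x, (y, z))
      = Set.indicator (Ioi (z^2/x)) φ y := by
    intro y
    have hmem : ((x, (y, z)) ∈ {v : ℝ × ℝ × ℝ | 0 < v.1 ∧ 0 < v.1 * v.2.1 - v.2.2^2})
        ↔ y ∈ Ioi (z^2/x) := by
      simp only [mem_setOf_eq, mem_Ioi]
      constructor
      · rintro ⟨-, h2⟩
        rw [div_lt_iff₀ hx]
        nlinarith
      · intro h
        exact ⟨hx, by nlinarith [(div_lt_iff₀ hx).mp h]⟩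
    rw [Set.indicator_apply, Set.indicator_apply, if_congr hmem rfl rfl]
  simp_rw [hind]
  have hxz : x * (z^2 / x) = z^2 := by field_simp
  have hIOn : IntegrableOn φ (Ioi (z^2/x)) := by
    have := (integrableOn_Ioi_comp_mul_left_iff ψ (z^2/x) hx).mpr
      (by rw [hxz]; exact y_integrable' ha hx)
    exact this.congr_fun (fun y _ => (hφψ y).symm) measurableSet_Ioi
  have hInt : Integrable (Set.indicator (Ioi (z^2/x)) φ) :=
    (integrable_indicator_iff measurableSet_Ioi).mpr hIOn
  have hnn : 0 ≤ᵐ[volume] Set.indicator (Ioi (z^2/x)) φ := by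
    refine Filter.Eventually.of_forall fun y => Set.indicator_nonneg (fun y hy => ?_) y
    have : z^2 < y * x := (div_lt_iff₀ hx).mp hy
    exact mul_nonneg (Real.rpow_nonneg (by nlinarith) _) (Real.exp_pos _).le
  rw [← ofReal_integral_eq_lintegral_ofReal hInt hnn]
  congr 1
  rw [integral_indicator measurableSet_Ioi]
  calc ∫ y in Ioi (z^2/x), φ y = ∫ y in Ioi (z^2/x), ψ (x * y) := by simp_rw [hφψ]
    _ = x⁻¹ • ∫ u in Ioi (x * (z^2/x)), ψ u := integral_comp_mul_left_Ioi ψ _ hx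
    _ = x⁻¹ * (Real.exp (-(x + x⁻¹ * z^2)) * (x ^ (a - 1/2) * Real.Gamma (a - 1/2))) := by
        rw [hxz, smul_eq_mul, y_integral' ha hx]
    _ = (x⁻¹ * Real.exp (-x) * x ^ (a - 1/2) * Real.Gamma (a - 1/2))
          * Real.exp (-(x⁻¹ * z^2)) := by
        rw [show -(x + x⁻¹ * z^2) = -x + -(x⁻¹ * z^2) by ring, Real.exp_add]
        ring

private lemma inner_z_lint' {x : ℝ} (hx : 0 < x) (K : ℝ) (hK : 0 ≤ K) :
    ∫⁻ z : ℝ, ENNReal.ofReal (K * Real.exp (-(x⁻¹ * z^2)))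
      = ENNReal.ofReal (K * Real.sqrt (π * x)) := by
  have hInt : Integrable (fun z : ℝ => K * Real.exp (-(x⁻¹ * z^2))) := by
    have := (integrable_exp_neg_mul_sq (inv_pos.mpr hx)).const_mul K
    simpa [neg_mul] using this
  have hnn : 0 ≤ᵐ[volume] fun z : ℝ => K * Real.exp (-(x⁻¹ * z^2)) :=
    Filter.Eventually.of_forall fun z => mul_nonneg hK (Real.exp_pos _).le
  rw [← ofReal_integral_eq_lintegral_ofReal hInt hnn]
  congr 1
  rw [integral_const_mul]
  have : ∀ z : ℝ, Real.exp (-(x⁻¹ * z^2)) = Real.exp (-x⁻¹ * z^2) := by intro z; rw [neg_mul]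
  simp_rw [this, integral_gaussian, div_inv_eq_mul]

end Aux

/-- The real matrix-variate gamma function
`Γ_p(a) = ∫_{X>0} |X|^{a−(p+1)/2} e^{−tr X} dX = π^{p(p−1)/4} ∏_{j=0}^{p−1} Γ(a − j/2)`:
the cases `p = 1` (`Γ_1(a) = Γ(a)`) and `p = 2`
(`Γ_2(a) = π^{1/2} Γ(a) Γ(a − 1/2)`), the latter with the cone of `2×2` symmetric
positive definite matrices parametrized by `(x, y, z) ↦ ![![x, z], ![z, y]]`. -/
theorem stmt_14 (a : ℝ) :
    ((1 : ℝ)/2 - 1 < a - 1 → -- i.e. Re(a) > (p-1)/2 for p = 1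
      ∫ x in Set.Ioi (0:ℝ), x ^ (a - (1 + 1 : ℝ)/2) * Real.exp (-x) = Real.Gamma a) ∧
    ((2 : ℝ)/2 - 1 < a - 1 → -- i.e. Re(a) > (p-1)/2 for p = 2
      ∫ v in {v : ℝ × ℝ × ℝ | 0 < v.1 ∧ 0 < v.1 * v.2.1 - v.2.2 ^ 2},
          (v.1 * v.2.1 - v.2.2 ^ 2) ^ (a - (2 + 1 : ℝ)/2) * Real.exp (-(v.1 + v.2.1)) =
        π ^ ((2 * (2 - 1) : ℝ)/4) * Real.Gamma a * Real.Gamma (a - 1/2)) := by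
  constructor
  · intro h1
    have ha : 0 < a := by linarith
    have he : a - (1 + 1 : ℝ)/2 = a - 1 := by norm_num
    rw [he, Real.Gamma_eq_integral ha]
    simp_rw [mul_comm]
  · intro h2
    have ha : 1 < a := by linarith
    have ha0 : 0 < a := by linarith
    have ha2 : 0 < a - 1/2 := by linarith
    have he : a - (2 + 1 : ℝ)/2 = a - 3/2 := by norm_num
    rw [he]
    set S : Set (ℝ × ℝ × ℝ) := {v : ℝ × ℝ × ℝ | 0 < v.1 ∧ 0 < v.1 * v.2.1 - v.2.2 ^ 2} with hSdef
    set g : ℝ × ℝ × ℝ → ℝ :=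
      fun v => (v.1 * v.2.1 - v.2.2 ^ 2) ^ (a - 3/2) * Real.exp (-(v.1 + v.2.1)) with hgdef
    have hq : Measurable fun v : ℝ × ℝ × ℝ => v.1 * v.2.1 - v.2.2 ^ 2 := by fun_prop
    have hS : MeasurableSet S :=
      (measurableSet_lt measurable_const measurable_fst).inter
        (measurableSet_lt measurable_const hq)
    have hg : Measurable g := by fun_prop
    have hF : Measurable fun v => ENNReal.ofReal (S.indicator g v) :=
      (hg.indicator hS).ennreal_ofReal
    set c : ℝ := Real.sqrt π * Real.Gamma (a - 1/2) with hcdef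
    have hc : 0 ≤ c :=
      mul_nonneg (Real.sqrt_nonneg _) (Real.Gamma_pos_of_pos ha2).le
    have hnn : 0 ≤ᵐ[volume] S.indicator g := by
      refine Filter.Eventually.of_forall fun v => Set.indicator_nonneg (fun v hv => ?_) v
      exact mul_nonneg (Real.rpow_nonneg hv.2.le _) (Real.exp_pos _).le
    have key : ∫ v in S, g v = c * Real.Gamma a := by
      rw [← integral_indicator hS,
        integral_eq_lintegral_of_nonneg_ae hnn (hg.indicator hS).aestronglyMeasurable]
      have main : (∫⁻ v, ENNReal.ofReal (S.indicator g v)) = ENNReal.ofReal (c * Real.Gamma a) := by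
        calc ∫⁻ v, ENNReal.ofReal (S.indicator g v)
            = ∫⁻ x, ∫⁻ p : ℝ × ℝ, ENNReal.ofReal (S.indicator g (x, p)) := by
              rw [MeasureTheory.Measure.volume_eq_prod]
              exact lintegral_prod _ hF.aemeasurable
          _ = ∫⁻ x, ∫⁻ z, ∫⁻ y, ENNReal.ofReal (S.indicator g (x, (y, z))) := by
              refine lintegral_congr fun x => ?_
              have hFx : Measurable fun p : ℝ × ℝ => ENNReal.ofReal (S.indicator g (x, p)) :=
                hF.comp measurable_prodMk_left
              rw [MeasureTheory.Measure.volume_eq_prod, lintegral_prod _ hFx.aemeasurable]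
              exact lintegral_lintegral_swap hFx.aemeasurable
          _ = ∫⁻ x, (Set.Ioi (0:ℝ)).indicator
                (fun x => ENNReal.ofReal (c * (x ^ (a - 1) * Real.exp (-x)))) x := by
              refine lintegral_congr fun x => ?_
              rcases le_or_gt x 0 with hx | hx
              · have h0 : ∀ p : ℝ × ℝ, S.indicator g (x, p) = 0 := fun p =>
                  Set.indicator_of_notMem (fun hmem => (not_lt.mpr hx) hmem.1) _
                simp only [h0, ENNReal.ofReal_zero, lintegral_zero]
                rw [Set.indicator_of_notMem (by simpa using hx)]
              · have step1 : ∀ z : ℝ,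
                    (∫⁻ y, ENNReal.ofReal (S.indicator g (x, (y, z))))
                      = ENNReal.ofReal
                        ((x⁻¹ * Real.exp (-x) * x ^ (a - 1/2) * Real.Gamma (a - 1/2))
                          * Real.exp (-(x⁻¹ * z^2))) := fun z => inner_y_lint' ha hx
                simp_rw [step1]
                have hK : 0 ≤ x⁻¹ * Real.exp (-x) * x ^ (a - 1/2) * Real.Gamma (a - 1/2) :=
                  mul_nonneg (mul_nonneg (mul_nonneg (inv_nonneg.mpr hx.le)
                    (Real.exp_pos _).le) (Real.rpow_nonneg hx.le _))
                    (Real.Gamma_pos_of_pos ha2).le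
                rw [inner_z_lint' hx _ hK, Set.indicator_of_mem (Set.mem_Ioi.mpr hx)]
                congr 1
                have h1 : x ^ (a - 1/2) * x ^ ((1:ℝ)/2) = x ^ a := by
                  rw [← Real.rpow_add hx]; norm_num
                have h2 : x⁻¹ * x ^ a = x ^ (a - 1) := by
                  rw [← Real.rpow_neg_one x, ← Real.rpow_add hx]; congr 1; ring
                calc x⁻¹ * Real.exp (-x) * x ^ (a - 1/2) * Real.Gamma (a - 1/2)
                      * Real.sqrt (π * x)
                    = x⁻¹ * Real.exp (-x) * x ^ (a - 1/2) * Real.Gamma (a - 1/2)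
                      * (Real.sqrt π * x ^ ((1:ℝ)/2)) := by
                      rw [Real.sqrt_mul Real.pi_nonneg, Real.sqrt_eq_rpow x]
                  _ = Real.sqrt π * Real.Gamma (a - 1/2) * Real.exp (-x)
                      * (x⁻¹ * (x ^ (a - 1/2) * x ^ ((1:ℝ)/2))) := by ring
                  _ = Real.sqrt π * Real.Gamma (a - 1/2) * Real.exp (-x) * x ^ (a - 1) := by
                      rw [h1, h2]
                  _ = c * (x ^ (a - 1) * Real.exp (-x)) := by rw [hcdef]; ring
          _ = ∫⁻ x in Set.Ioi (0:ℝ), ENNReal.ofReal (c * (x ^ (a - 1) * Real.exp (-x))) :=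
              lintegral_indicator measurableSet_Ioi _
          _ = ENNReal.ofReal (c * Real.Gamma a) := by
              have hIOn : IntegrableOn (fun x : ℝ => c * (x ^ (a - 1) * Real.exp (-x)))
                  (Set.Ioi (0:ℝ)) := by
                have hbase : IntegrableOn
                    (fun t : ℝ => t ^ (a - 1) * Real.exp (-1 * t ^ (1:ℝ))) (Set.Ioi (0:ℝ)) :=
                  integrableOn_rpow_mul_exp_neg_mul_rpow (by linarith) one_pos one_pos
                simp only [Real.rpow_one, neg_one_mul] at hbase
                exact hbase.const_mul c
              have hnn' : 0 ≤ᵐ[volume.restrict (Set.Ioi (0:ℝ))]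
                  fun x : ℝ => c * (x ^ (a - 1) * Real.exp (-x)) := by
                refine ae_restrict_of_forall_mem measurableSet_Ioi fun x hx => ?_
                exact mul_nonneg hc (mul_nonneg (Real.rpow_nonneg (le_of_lt hx) _)
                  (Real.exp_pos _).le)
              rw [← ofReal_integral_eq_lintegral_ofReal hIOn hnn']
              congr 1
              rw [integral_const_mul]
              have hval := Real.integral_rpow_mul_exp_neg_mul_Ioi ha0 one_pos
              simp only [one_mul, one_div, inv_one, Real.one_rpow] at hval
              rw [hval]
      rw [main, ENNReal.toReal_ofReal (mul_nonneg hc (Real.Gamma_pos_of_pos ha0).le)]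
    rw [key]
    have hπ : ((2 * (2 - 1) : ℝ))/4 = 1/2 := by norm_num
    rw [hπ, hcdef, ← Real.sqrt_eq_rpow]
    ring
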